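/- Let ρ be a smooth real-valued function on an open set U ⊂ ℂⁿ (n > 1) with dρ ≠ 0 on M = {z ∈ U : ρ(z) = 0}, and suppose M is strictly pseudoconvex: the complex Hessian H(ρ)(z) = [∂²ρ/∂z_i∂z̄_j(z)] is positive definite on the complex tangent space H_zM = {w ∈ ℂⁿ : Σ_j (∂ρ/∂z_j)(z) w_j = 0} for every z ∈ M. Fix z⁰ ∈ M with (∂ρ/∂z_n)(z⁰) ≠ 0 and define, on a neighborhood of z⁰, the map G(z) = (z, a₁(z), …, a_{n−1}(z)) ∈ ℂⁿ × ℂ^{n−1} ≅ ℂ^{2n−1}, where a_j = (∂ρ/∂z_j)/(∂ρ/∂z_n) (so G records z together with affine coordinates of the complex tangent hyperplane H_zM). Then the image of M under G is totally real at G(z⁰): the real subspace T = dG_{z⁰}(T_{z⁰}M) ⊂ ℂ^{2n−1}, where T_{z⁰}M = ker(dρ_{z⁰}) is the real tangent space of M, satisfies T ∩ iT = {0}. -/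

import Mathlib

set_option maxHeartbeats 1000000


open Complex Metric

noncomputable section

/-- The Wirtinger derivative `∂f/∂z_j` of `f : ℂⁿ → ℂ` at `z`. -/
def wDz (n : ℕ) (j : Fin n) (f : EuclideanSpace ℂ (Fin n) → ℂ)
    (z : EuclideanSpace ℂ (Fin n)) : ℂ :=
  (fderiv ℝ f z (EuclideanSpace.single j 1)
    - Complex.I * fderiv ℝ f z (EuclideanSpace.single j Complex.I)) / 2

/-- The Wirtinger derivative `∂f/∂z̄_j` of `f : ℂⁿ → ℂ` at `z`. -/
def wDzBar (n : ℕ) (j : Fin n) (f : EuclideanSpace ℂ (Fin n) → ℂ)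
    (z : EuclideanSpace ℂ (Fin n)) : ℂ :=
  (fderiv ℝ f z (EuclideanSpace.single j 1)
    + Complex.I * fderiv ℝ f z (EuclideanSpace.single j Complex.I)) / 2

/-- The complex Hessian matrix `H(u)(z) = [∂²u/∂z_i∂z̄_j(z)]` of a real-valued `u`. -/
def cHess (n : ℕ) (u : EuclideanSpace ℂ (Fin n) → ℝ)
    (z : EuclideanSpace ℂ (Fin n)) : Matrix (Fin n) (Fin n) ℂ :=
  Matrix.of fun i j => wDz n i (fun w => wDzBar n j (fun v => ((u v : ℝ) : ℂ)) w) z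

/-- The Hermitian form `Σ_{i,j} H(u)(z)_{ij} w_i w̄_j`. -/
def cHessForm (n : ℕ) (u : EuclideanSpace ℂ (Fin n) → ℝ)
    (z : EuclideanSpace ℂ (Fin n)) (w : Fin n → ℂ) : ℂ :=
  ∑ i, ∑ j, cHess n u z i j * w i * (starRingEnd ℂ) (w j)

/-- The pairing `Σ_j (∂u/∂z_j)(z) w_j` of the complex gradient with a vector. -/
def cGradPair (n : ℕ) (u : EuclideanSpace ℂ (Fin n) → ℝ)
    (z : EuclideanSpace ℂ (Fin n)) (w : Fin n → ℂ) : ℂ :=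
  ∑ j, wDz n j (fun v => ((u v : ℝ) : ℂ)) z * w j

/-- `ρ` is a `C^k` defining function for `Ω`, defined on the open neighborhood `U` of `Ω̄`. -/
def IsDefiningFn (n : ℕ) (k : ℕ∞) (Ω U : Set (EuclideanSpace ℂ (Fin n)))
    (ρ : EuclideanSpace ℂ (Fin n) → ℝ) : Prop :=
  IsOpen U ∧ closure Ω ⊆ U ∧ ContDiffOn ℝ k ρ U ∧
    Ω = {z ∈ U | ρ z < 0} ∧ ∀ z ∈ frontier Ω, fderiv ℝ ρ z ≠ 0

/-- `Ω` is a bounded strictly pseudoconvex domain with `C^k` boundary. -/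
def IsStrictlyPseudoconvexDomain (n : ℕ) (k : ℕ∞)
    (Ω : Set (EuclideanSpace ℂ (Fin n))) : Prop :=
  IsOpen Ω ∧ Bornology.IsBounded Ω ∧
    ∃ U ρ, IsDefiningFn n k Ω U ρ ∧
      ∀ z ∈ frontier Ω, ∀ w : Fin n → ℂ, w ≠ 0 →
        cGradPair n ρ z w = 0 → 0 < (cHessForm n ρ z w).re

/-- The complex Jacobian matrix `φ'(z) = [∂φ_i/∂z_j(z)]` of `φ : ℂⁿ → ℂⁿ`. -/
def jacobian (n : ℕ) (φ : EuclideanSpace ℂ (Fin n) → EuclideanSpace ℂ (Fin n))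
    (z : EuclideanSpace ℂ (Fin n)) : Matrix (Fin n) (Fin n) ℂ :=
  Matrix.of fun i j => wDz n j (fun w => φ w i) z

/-- `φ` is a proper map from `Ω₁` to `Ω₂`. -/
def IsProperMapOn (n : ℕ) (φ : EuclideanSpace ℂ (Fin n) → EuclideanSpace ℂ (Fin n))
    (Ω₁ Ω₂ : Set (EuclideanSpace ℂ (Fin n))) : Prop :=
  Set.MapsTo φ Ω₁ Ω₂ ∧ ∀ K ⊆ Ω₂, IsCompact K → IsCompact {z ∈ Ω₁ | φ z ∈ K}


/-- The index `n-1 : Fin n` (the "last", complex normal, coordinate). -/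
def lastIdx (n : ℕ) (hn : 0 < n) : Fin n := ⟨n - 1, Nat.sub_lt hn one_pos⟩

/-- Webster's map `G(z) = (z, a₁(z), …, a_{n-1}(z))` with
`a_j = (∂ρ/∂z_j)/(∂ρ/∂z_n)`, recording the complex tangent hyperplane of `M`. -/
def websterMap (n : ℕ) (hn : 0 < n) (ρ : EuclideanSpace ℂ (Fin n) → ℝ)
    (z : EuclideanSpace ℂ (Fin n)) :
    EuclideanSpace ℂ (Fin n) × (Fin (n - 1) → ℂ) :=
  (z, fun j => wDz n (Fin.castLE (Nat.sub_le n 1) j) (fun v => ((ρ v : ℝ) : ℂ)) z /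
        wDz n (lastIdx n hn) (fun v => ((ρ v : ℝ) : ℂ)) z)

-- auxiliary lemmas

lemma aux_sum_single {n : ℕ} (u : EuclideanSpace ℂ (Fin n)) :
    ∑ k, EuclideanSpace.single k (u k) = u := by
  ext m
  rw [show (∑ k, EuclideanSpace.single k (u k)) m
      = (EuclideanSpace.proj m : EuclideanSpace ℂ (Fin n) →L[ℂ] ℂ)
        (∑ k, EuclideanSpace.single k (u k)) from rfl, map_sum]
  simp [EuclideanSpace.single_apply]

lemma aux_single_decomp {n : ℕ} (k : Fin n) (a b : ℝ) :
    EuclideanSpace.single k ((a:ℂ) + b * Complex.I)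
      = a • EuclideanSpace.single k (1:ℂ) + b • EuclideanSpace.single k Complex.I := by
  ext m
  by_cases hm : m = k <;> simp [EuclideanSpace.single_apply, hm, Complex.real_smul]

lemma aux_smul_single {n : ℕ} (k : Fin n) (c d : ℂ) :
    c • EuclideanSpace.single k d = EuclideanSpace.single (𝕜 := ℂ) k (c * d) := by
  ext m
  by_cases hm : m = k <;> simp [EuclideanSpace.single_apply, hm]


/-- Webster. The image under `G` of a strictly pseudoconvex
hypersurface `M` is totally real at `G(z⁰)`: the image `T` of the real tangent space
`T_{z⁰}M = ker(dρ)` under `dG_{z⁰}` satisfies `T ∩ iT = {0}`. -/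
theorem webster_totally_real (n : ℕ) (hn : 1 < n)
    (U M : Set (EuclideanSpace ℂ (Fin n))) (hU : IsOpen U)
    (ρ : EuclideanSpace ℂ (Fin n) → ℝ) (hρ : ContDiffOn ℝ (⊤ : ℕ∞) ρ U)
    (hM : M = {z ∈ U | ρ z = 0})
    (hgrad : ∀ z ∈ M, fderiv ℝ ρ z ≠ 0)
    (hspc : ∀ z ∈ M, ∀ w : Fin n → ℂ, w ≠ 0 →
      cGradPair n ρ z w = 0 → 0 < (cHessForm n ρ z w).re)
    (z0 : EuclideanSpace ℂ (Fin n)) (hz0 : z0 ∈ M)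
    (hzn : wDz n (lastIdx n (by omega)) (fun v => ((ρ v : ℝ) : ℂ)) z0 ≠ 0) :
    ∀ v w : EuclideanSpace ℂ (Fin n),
      fderiv ℝ ρ z0 v = 0 → fderiv ℝ ρ z0 w = 0 →
      fderiv ℝ (websterMap n (by omega) ρ) z0 v
        = Complex.I • fderiv ℝ (websterMap n (by omega) ρ) z0 w →
      fderiv ℝ (websterMap n (by omega) ρ) z0 v = 0 := by
  intro v w hv hw hvw
  have h0 : 0 < n := by omega
  classical
  set ρC : EuclideanSpace ℂ (Fin n) → ℂ := fun v => ((ρ v : ℝ) : ℂ) with hρCdef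
  set L : Fin n := lastIdx n h0 with hLdef
  have hz0U : z0 ∈ U := by rw [hM] at hz0; exact hz0.1
  have hρat : ContDiffAt ℝ ((⊤:ℕ∞) : WithTop ℕ∞) ρ z0 := hρ.contDiffAt (hU.mem_nhds hz0U)
  have hρCat : ContDiffAt ℝ ((⊤:ℕ∞) : WithTop ℕ∞) ρC z0 :=
    (Complex.ofRealCLM.contDiff.contDiffAt).comp z0 hρat
  have h3top : ((3:ℕ) : WithTop ℕ∞) ≤ ((⊤ : ℕ∞) : WithTop ℕ∞) := by
    rw [show ((3:ℕ) : WithTop ℕ∞) = (((3:ℕ):ℕ∞) : WithTop ℕ∞) by rfl]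
    exact_mod_cast (le_top : ((3:ℕ):ℕ∞) ≤ ⊤)
  have hρC3 : ContDiffAt ℝ 3 ρC z0 := hρCat.of_le h3top
  have hFat : ContDiffAt ℝ 2 (fderiv ℝ ρC) z0 := hρC3.fderiv_right (by norm_num)
  have hB0 : DifferentiableAt ℝ (fderiv ℝ ρC) z0 := hFat.differentiableAt (by norm_num)
  set B := fderiv ℝ (fderiv ℝ ρC) z0 with hBdef
  have hB : HasFDerivAt (fderiv ℝ ρC) B z0 := hB0.hasFDerivAt
  have hsymm : ∀ x y, B x y = B y x := fun x y =>
    (hρC3.isSymmSndFDerivAt (by norm_num)) x y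
  -- derivative of z ↦ fderiv ρC z a
  have happ : ∀ a : EuclideanSpace ℂ (Fin n),
      HasFDerivAt (fun z => fderiv ℝ ρC z a) (B.flip a) z0 := by
    intro a
    have h := (ContinuousLinearMap.apply ℝ ℂ a).hasFDerivAt.comp z0 hB
    have he : (ContinuousLinearMap.apply ℝ ℂ a).comp B = B.flip a := by ext u; rfl
    rw [← he]; exact h
  -- derivative of the Wirtinger derivatives
  set N : Fin n → (EuclideanSpace ℂ (Fin n) →L[ℝ] ℂ) := fun j =>
    (2:ℂ)⁻¹ • (B.flip (EuclideanSpace.single j 1)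
      - Complex.I • B.flip (EuclideanSpace.single j Complex.I)) with hNdef
  set Mk : Fin n → (EuclideanSpace ℂ (Fin n) →L[ℝ] ℂ) := fun j =>
    (2:ℂ)⁻¹ • (B.flip (EuclideanSpace.single j 1)
      + Complex.I • B.flip (EuclideanSpace.single j Complex.I)) with hMdef
  have hN : ∀ j : Fin n, HasFDerivAt (fun z => wDz n j ρC z) (N j) z0 := by
    intro j
    have h := (((happ (EuclideanSpace.single j 1)).sub
      ((happ (EuclideanSpace.single j Complex.I)).const_mul Complex.I)).const_mul ((2:ℂ)⁻¹))
    have hfun : (fun z => wDz n j ρC z)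
        = fun z => (2:ℂ)⁻¹ * (fderiv ℝ ρC z (EuclideanSpace.single j 1)
            - Complex.I * fderiv ℝ ρC z (EuclideanSpace.single j Complex.I)) := by
      funext z; rw [wDz, div_eq_inv_mul]
    rw [hfun]; exact h
  have hM2 : ∀ j : Fin n, HasFDerivAt (fun z => wDzBar n j ρC z) (Mk j) z0 := by
    intro j
    have h := (((happ (EuclideanSpace.single j 1)).add
      ((happ (EuclideanSpace.single j Complex.I)).const_mul Complex.I)).const_mul ((2:ℂ)⁻¹))
    have hfun : (fun z => wDzBar n j ρC z)
        = fun z => (2:ℂ)⁻¹ * (fderiv ℝ ρC z (EuclideanSpace.single j 1)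
            + Complex.I * fderiv ℝ ρC z (EuclideanSpace.single j Complex.I)) := by
      funext z; rw [wDzBar, div_eq_inv_mul]
    rw [hfun]; exact h
  have hNval : ∀ (j : Fin n) (u : EuclideanSpace ℂ (Fin n)), N j u
      = (B u (EuclideanSpace.single j 1)
        - Complex.I * B u (EuclideanSpace.single j Complex.I)) / 2 := by
    intro j u
    simp only [hNdef, ContinuousLinearMap.smul_apply, ContinuousLinearMap.sub_apply,
      ContinuousLinearMap.flip_apply, smul_eq_mul]
    ring
  have hMval : ∀ (j : Fin n) (u : EuclideanSpace ℂ (Fin n)), Mk j u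
      = (B u (EuclideanSpace.single j 1)
        + Complex.I * B u (EuclideanSpace.single j Complex.I)) / 2 := by
    intro j u
    simp only [hMdef, ContinuousLinearMap.smul_apply, ContinuousLinearMap.add_apply,
      ContinuousLinearMap.flip_apply, smul_eq_mul]
    ring
  -- Hessian entries in terms of N
  have hHval : ∀ j k : Fin n, cHess n ρ z0 j k
      = (Mk k (EuclideanSpace.single j 1)
        - Complex.I * Mk k (EuclideanSpace.single j Complex.I)) / 2 := by
    intro j k
    have hfd : fderiv ℝ (fun z => wDzBar n k ρC z) z0 = Mk k := (hM2 k).fderiv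
    show wDz n j (fun y => wDzBar n k ρC y) z0 = _
    rw [wDz, hfd]
  have hH : ∀ j k : Fin n, cHess n ρ z0 j k
      = (N j (EuclideanSpace.single k 1)
        + Complex.I * N j (EuclideanSpace.single k Complex.I)) / 2 := by
    intro j k
    rw [hHval j k, hNval, hNval, hMval, hMval]
    have e1 := hsymm (EuclideanSpace.single j 1) (EuclideanSpace.single k 1)
    have e2 := hsymm (EuclideanSpace.single j 1) (EuclideanSpace.single k Complex.I)
    have e3 := hsymm (EuclideanSpace.single j Complex.I) (EuclideanSpace.single k 1)
    have e4 := hsymm (EuclideanSpace.single j Complex.I) (EuclideanSpace.single k Complex.I)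
    linear_combination ((1:ℂ)/4) * e1 + (Complex.I/4) * e2 - (Complex.I/4) * e3 + ((1:ℂ)/4) * e4
      + (((B (EuclideanSpace.single k Complex.I)) (EuclideanSpace.single j Complex.I)
          - (B (EuclideanSpace.single j Complex.I)) (EuclideanSpace.single k Complex.I))/4) * Complex.I_sq
  -- single-vector key identity
  have hSingleAB : ∀ (j k : Fin n) (a b : ℝ),
      N j (EuclideanSpace.single k (Complex.I * ((a:ℂ) + b * Complex.I)))
        - Complex.I * N j (EuclideanSpace.single k ((a:ℂ) + b * Complex.I))
      = (-2 * Complex.I) * (cHess n ρ z0 j k * (starRingEnd ℂ) ((a:ℂ) + b * Complex.I)) := by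
    intro j k a b
    have hIc : Complex.I * ((a:ℂ) + b * Complex.I) = ((-b : ℝ):ℂ) + (a:ℝ) * Complex.I := by
      push_cast
      linear_combination (b:ℂ) * Complex.I_sq
    have hcc : (starRingEnd ℂ) ((a:ℂ) + b * Complex.I) = (a:ℂ) - b * Complex.I := by
      simp [map_add, map_mul, Complex.conj_ofReal, Complex.conj_I]
      ring
    rw [hIc, aux_single_decomp k (-b) a, aux_single_decomp k a b,
      map_add, map_add, map_smul, map_smul, map_smul, map_smul, hH j k, hcc]
    simp only [Complex.real_smul]
    push_cast
    linear_combination ((a:ℂ) * (N j (EuclideanSpace.single k Complex.I))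
      - (b:ℂ) * (N j (EuclideanSpace.single k 1))
      - (b:ℂ) * Complex.I * (N j (EuclideanSpace.single k Complex.I))) * Complex.I_sq
  have hSingle : ∀ (j k : Fin n) (c : ℂ),
      N j (EuclideanSpace.single k (Complex.I * c))
        - Complex.I * N j (EuclideanSpace.single k c)
      = (-2 * Complex.I) * (cHess n ρ z0 j k * (starRingEnd ℂ) c) := by
    intro j k c
    have h := hSingleAB j k c.re c.im
    rwa [Complex.re_add_im] at h
  -- the L index, denominators
  have hzn' : wDz n L ρC z0 ≠ 0 := hzn
  set f0 : Fin n → ℂ := fun j => wDz n j ρC z0 with hf0def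
  have hzn'' : f0 L ≠ 0 := hzn'
  -- derivative of quotients
  have hD : ∀ j : Fin n, HasFDerivAt
      (fun z => wDz n j ρC z / wDz n L ρC z)
      ((f0 L)⁻¹ • N j - (f0 j * ((f0 L)^2)⁻¹) • N L) z0 := by
    intro j
    have hinv : HasFDerivAt (fun y : ℂ => y⁻¹)
        ((ContinuousLinearMap.smulRight (1 : ℂ →L[ℂ] ℂ) (-((f0 L) ^ 2)⁻¹)).restrictScalars ℝ)
        (f0 L) := (hasFDerivAt_inv hzn'').restrictScalars ℝ
    have hginv := hinv.comp z0 (hN L)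
    have h := (hN j).mul hginv
    have hfun : (fun z => wDz n j ρC z / wDz n L ρC z)
        = fun z => wDz n j ρC z * (wDz n L ρC z)⁻¹ := by
      funext z; rw [div_eq_mul_inv]
    rw [hfun]
    refine HasFDerivAt.congr_fderiv h ?_
    ext u
    simp only [ContinuousLinearMap.sub_apply, ContinuousLinearMap.smul_apply,
      ContinuousLinearMap.add_apply, ContinuousLinearMap.comp_apply,
      ContinuousLinearMap.coe_restrictScalars', ContinuousLinearMap.smulRight_apply,
      ContinuousLinearMap.one_apply, smul_eq_mul, Function.comp]
    ring
  -- derivative of the Webster map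
  set c : Fin (n-1) → Fin n := Fin.castLE (Nat.sub_le n 1) with hcdef
  set PI : EuclideanSpace ℂ (Fin n) →L[ℝ] (Fin (n-1) → ℂ) :=
    ContinuousLinearMap.pi (fun j : Fin (n-1) =>
      (f0 L)⁻¹ • N (c j) - (f0 (c j) * ((f0 L)^2)⁻¹) • N L) with hPIdef
  have hG : HasFDerivAt (websterMap n h0 ρ)
      ((ContinuousLinearMap.id ℝ (EuclideanSpace ℂ (Fin n))).prod PI) z0 := by
    have hpi := hasFDerivAt_pi.2 (fun j : Fin (n-1) => hD (c j))
    exact (hasFDerivAt_id z0).prodMk hpi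
  have hvw' : fderiv ℝ (websterMap n h0 ρ) z0 v
      = Complex.I • fderiv ℝ (websterMap n h0 ρ) z0 w := hvw
  rw [hG.fderiv] at hvw'
  have h1 : v = Complex.I • w := by
    have := congrArg Prod.fst hvw'
    simpa using this
  have h2 : PI v = Complex.I • PI w := by
    have := congrArg Prod.snd hvw'
    simpa using this
  -- suffices w = 0
  suffices hw0 : w = 0 by
    show fderiv ℝ (websterMap n h0 ρ) z0 v = 0
    rw [hG.fderiv, hvw', hw0, map_zero, smul_zero]
  -- key scalar relations
  have h2j : ∀ j : Fin (n-1),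
      (f0 L)⁻¹ * N (c j) (Complex.I • w) - (f0 (c j) * ((f0 L)^2)⁻¹) * N L (Complex.I • w)
      = Complex.I * ((f0 L)⁻¹ * N (c j) w - (f0 (c j) * ((f0 L)^2)⁻¹) * N L w) := by
    intro j
    have := congrFun h2 j
    simp only [hPIdef, ContinuousLinearMap.pi_apply, Pi.smul_apply,
      ContinuousLinearMap.sub_apply, ContinuousLinearMap.smul_apply, smul_eq_mul] at this
    rw [h1] at this
    exact this
  have key : ∀ j : Fin n,
      (N j (Complex.I • w) - Complex.I * N j w) * f0 L
      = f0 j * (N L (Complex.I • w) - Complex.I * N L w) := by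
    intro j
    by_cases hj : j = L
    · subst hj; ring
    · have hjlt : (j : ℕ) < n - 1 := by
        have hje : (j : ℕ) ≠ n - 1 := fun h => hj (Fin.ext (by simp [hLdef, lastIdx, h]))
        omega
      have hcj : c ⟨(j : ℕ), hjlt⟩ = j := Fin.ext rfl
      have h := h2j ⟨(j : ℕ), hjlt⟩
      rw [hcj] at h
      field_simp at h
      apply mul_left_cancel₀ hzn''
      linear_combination (f0 L) * h
  -- sum representation
  have hsumw : w = ∑ k, EuclideanSpace.single k (w k) := (aux_sum_single w).symm
  have hIw : (Complex.I • w : EuclideanSpace ℂ (Fin n))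
      = ∑ k, EuclideanSpace.single k (Complex.I * w k) := by
    have h := aux_sum_single (Complex.I • w)
    simp only [PiLp.smul_apply, smul_eq_mul] at h
    exact h.symm
  set bb : Fin n → ℂ := fun j => ∑ k, cHess n ρ z0 j k * (starRingEnd ℂ) (w k) with hbbdef
  have hbS : ∀ j : Fin n,
      N j (Complex.I • w) - Complex.I * N j w = (-2 * Complex.I) * bb j := by
    intro j
    have hA : N j (Complex.I • w) = ∑ k, N j (EuclideanSpace.single k (Complex.I * w k)) := by
      rw [hIw, map_sum]
    have hBB : N j w = ∑ k, N j (EuclideanSpace.single k (w k)) := by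
      conv_lhs => rw [hsumw]
      rw [map_sum]
    rw [hA, hBB, Finset.mul_sum, ← Finset.sum_sub_distrib, hbbdef, Finset.mul_sum]
    exact Finset.sum_congr rfl fun k _ => hSingle j k (w k)
  have keyb : ∀ j : Fin n, bb j * f0 L = f0 j * bb L := by
    intro j
    have h := key j
    rw [hbS j, hbS L] at h
    have h2I : (-2 * Complex.I) ≠ 0 := by simp [Complex.I_ne_zero]
    apply mul_left_cancel₀ h2I
    linear_combination h
  -- gradient pairing vanishes
  have hρdiff : DifferentiableAt ℝ ρ z0 := by
    apply hρat.differentiableAt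
    simp
  have hFC : ∀ u, fderiv ℝ ρC z0 u = ((fderiv ℝ ρ z0 u : ℝ) : ℂ) := by
    intro u
    have hfd : fderiv ℝ ρC z0 = Complex.ofRealCLM.comp (fderiv ℝ ρ z0) := by
      rw [show ρC = (⇑Complex.ofRealCLM ∘ ρ) from rfl,
        fderiv_comp (x := z0) Complex.ofRealCLM.differentiableAt hρdiff,
        ContinuousLinearMap.fderiv]
    rw [hfd]; rfl
  have hPsingleAB : ∀ (j : Fin n) (a b : ℝ),
      (fderiv ℝ ρC z0 (EuclideanSpace.single j ((a:ℂ) + b * Complex.I))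
        - Complex.I * fderiv ℝ ρC z0
            (EuclideanSpace.single j (Complex.I * ((a:ℂ) + b * Complex.I)))) / 2
      = f0 j * ((a:ℂ) + b * Complex.I) := by
    intro j a b
    have hIc : Complex.I * ((a:ℂ) + b * Complex.I) = ((-b : ℝ):ℂ) + (a:ℝ) * Complex.I := by
      push_cast
      linear_combination (b:ℂ) * Complex.I_sq
    rw [hIc, aux_single_decomp j (-b) a, aux_single_decomp j a b,
      map_add, map_add, map_smul, map_smul, map_smul, map_smul]
    have hf0 : f0 j = (fderiv ℝ ρC z0 (EuclideanSpace.single j 1)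
        - Complex.I * fderiv ℝ ρC z0 (EuclideanSpace.single j Complex.I)) / 2 := rfl
    rw [hf0]
    simp only [Complex.real_smul]
    push_cast
    linear_combination ((b:ℂ)/2 * fderiv ℝ ρC z0 (EuclideanSpace.single j Complex.I)) * Complex.I_sq
  have hPsingle : ∀ (j : Fin n) (cc : ℂ),
      (fderiv ℝ ρC z0 (EuclideanSpace.single j cc)
        - Complex.I * fderiv ℝ ρC z0 (EuclideanSpace.single j (Complex.I * cc))) / 2
      = f0 j * cc := by
    intro j cc
    have h := hPsingleAB j cc.re cc.im
    rwa [Complex.re_add_im] at h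
  have hgrad0 : cGradPair n ρ z0 w = 0 := by
    have hrep : cGradPair n ρ z0 w = ∑ j, f0 j * w j := rfl
    have hstep : ∀ j : Fin n, f0 j * w j
        = (fderiv ℝ ρC z0 (EuclideanSpace.single j (w j))
          - Complex.I * fderiv ℝ ρC z0 (EuclideanSpace.single j (Complex.I * w j))) / 2 :=
      fun j => (hPsingle j (w j)).symm
    rw [hrep]
    have hsum1 : fderiv ℝ ρC z0 w = ∑ j, fderiv ℝ ρC z0 (EuclideanSpace.single j (w j)) := by
      conv_lhs => rw [hsumw]
      rw [map_sum]
    have hsum2 : fderiv ℝ ρC z0 (Complex.I • w)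
        = ∑ j, fderiv ℝ ρC z0 (EuclideanSpace.single j (Complex.I * w j)) := by
      rw [hIw, map_sum]
    calc ∑ j, f0 j * w j
        = ∑ j, (fderiv ℝ ρC z0 (EuclideanSpace.single j (w j))
            - Complex.I * fderiv ℝ ρC z0 (EuclideanSpace.single j (Complex.I * w j))) / 2 :=
          Finset.sum_congr rfl fun j _ => hstep j
      _ = (fderiv ℝ ρC z0 w - Complex.I * fderiv ℝ ρC z0 (Complex.I • w)) / 2 := by
          rw [hsum1, hsum2, Finset.mul_sum, ← Finset.sum_sub_distrib, ← Finset.sum_div]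
      _ = 0 := by
          rw [hFC, hFC, hw]
          have : fderiv ℝ ρ z0 (Complex.I • w) = 0 := by rw [← h1]; exact hv
          rw [this]
          simp
  -- conclude w = 0
  by_contra hwne
  have hwne' : (fun k => w k) ≠ (0 : Fin n → ℂ) := by
    intro h
    apply hwne
    ext k
    exact congrFun h k
  have hpos := hspc z0 hz0 (fun k => w k) hwne' hgrad0
  have hformrep : cHessForm n ρ z0 (fun k => w k) = ∑ i, w i * bb i := by
    rw [cHessForm]
    refine Finset.sum_congr rfl fun i _ => ?_
    rw [hbbdef, Finset.mul_sum]
    exact Finset.sum_congr rfl fun k _ => by ring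
  have hform0 : cHessForm n ρ z0 (fun k => w k) * f0 L = 0 := by
    rw [hformrep, Finset.sum_mul]
    have : ∀ i : Fin n, w i * bb i * f0 L = f0 i * w i * bb L := by
      intro i
      have := keyb i
      calc w i * bb i * f0 L = w i * (bb i * f0 L) := by ring
        _ = w i * (f0 i * bb L) := by rw [this]
        _ = f0 i * w i * bb L := by ring
    rw [Finset.sum_congr rfl fun i _ => this i, ← Finset.sum_mul]
    have hcg : ∑ i, f0 i * w i = cGradPair n ρ z0 w := rfl
    rw [hcg, hgrad0, zero_mul]
  have hform : cHessForm n ρ z0 (fun k => w k) = 0 :=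
    (mul_eq_zero.1 hform0).resolve_right hzn''
  rw [hform] at hpos
  simp at hpos
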